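/- For r ∈ [0,1] and any probability distribution P on a finite vocabulary, F_{1,P}(r) = Σ_w P_w r^{1/P_w} is a convex function of P (for fixed r), and hence sup over the Δ-regular class P_Δ = {P : max_w P_w ≤ 1−Δ} of F_{1,P}(r) is attained at an extreme point; when Δ < 1/2 the extreme points of P_Δ are permutations of (1−Δ, Δ, 0, …, 0), so sup_{P∈P_Δ} F_{1,P}(r) = (1−Δ) r^{1/(1−Δ)} + Δ r^{1/Δ}. -/

import Mathlib

open Real Set

private lemma phi_mono : MonotoneOn (fun u : ℝ => Real.exp u * (1 - u)) (Set.Iic 0) := by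
  have hd : ∀ u : ℝ, HasDerivAt (fun u : ℝ => Real.exp u * (1 - u)) (Real.exp u * (-u)) u := by
    intro u
    have h : HasDerivAt (fun u : ℝ => Real.exp u * (1 - u)) (Real.exp u * (1 - u) + Real.exp u * (0 - 1)) u := (Real.hasDerivAt_exp u).mul ((hasDerivAt_const u (1:ℝ)).sub (hasDerivAt_id u))
    convert h using 1
    ring
  apply monotoneOn_of_deriv_nonneg (convex_Iic 0)
  · exact fun x _ => (hd x).differentiableAt.continuousAt.continuousWithinAt
  · exact fun x _ => (hd x).differentiableAt.differentiableWithinAt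
  · intro x hx
    rw [interior_Iic] at hx
    rw [(hd x).deriv]
    have hx0 : (0:ℝ) ≤ -x := by linarith [hx.out]
    exact mul_nonneg (Real.exp_pos x).le hx0

private lemma g_hasDeriv (c : ℝ) {p : ℝ} (hp : p ≠ 0) :
    HasDerivAt (fun p : ℝ => p * Real.exp (c * p⁻¹))
      (Real.exp (c * p⁻¹) * (1 - c * p⁻¹)) p := by
  have h1 : HasDerivAt (fun p : ℝ => c * p⁻¹) (c * (-(p ^ 2)⁻¹)) p :=
    (hasDerivAt_inv hp).const_mul c
  have h3 : HasDerivAt (fun p : ℝ => p * Real.exp (c * p⁻¹)) (1 * Real.exp (c * p⁻¹) + p * (Real.exp (c * p⁻¹) * (c * -(p ^ 2)⁻¹))) p := (hasDerivAt_id p).mul h1.exp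
  convert h3 using 1
  have hp2 : (p:ℝ) ^ 2 ≠ 0 := pow_ne_zero _ hp
  field_simp
  ring

private lemma g_convexOn {c : ℝ} (hc : c ≤ 0) :
    ConvexOn ℝ (Set.Ici (0:ℝ)) (fun p : ℝ => p * Real.exp (c * p⁻¹)) := by
  have hcont : ContinuousOn (fun p : ℝ => p * Real.exp (c * p⁻¹)) (Set.Ici 0) := by
    intro p hp
    rcases eq_or_lt_of_le (hp.out) with h0 | h0
    · -- continuity at 0 by squeeze
      have hW : ∀ q ∈ Set.Ici (0:ℝ), q * Real.exp (c * q⁻¹) ∈ Set.Icc 0 q := by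
        intro q hq
        have hcq : c * q⁻¹ ≤ 0 := mul_nonpos_of_nonpos_of_nonneg hc (inv_nonneg.2 hq.out)
        refine ⟨mul_nonneg hq.out (Real.exp_pos _).le, ?_⟩
        calc q * Real.exp (c * q⁻¹) ≤ q * 1 :=
              mul_le_mul_of_nonneg_left (Real.exp_le_one_iff.2 hcq) hq.out
          _ = q := mul_one q
      have hp0 : p = 0 := h0.symm
      subst hp0
      rw [ContinuousWithinAt]
      simp only [inv_zero, mul_zero, Real.exp_zero, mul_one, zero_mul]
      apply squeeze_zero'
      · filter_upwards [eventually_mem_nhdsWithin] with q hq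
        exact (hW q hq).1
      · filter_upwards [eventually_mem_nhdsWithin] with q hq
        exact (hW q hq).2
      · exact Filter.Tendsto.mono_left Filter.tendsto_id nhdsWithin_le_nhds
    · exact (g_hasDeriv c h0.ne').differentiableAt.continuousAt.continuousWithinAt
  apply MonotoneOn.convexOn_of_deriv (convex_Ici 0) hcont
  · rw [interior_Ici]
    exact fun p hp => (g_hasDeriv c (ne_of_gt hp)).differentiableAt.differentiableWithinAt
  · rw [interior_Ici]
    intro p hp q hq hpq
    rw [(g_hasDeriv c (ne_of_gt hp)).deriv, (g_hasDeriv c (ne_of_gt hq)).deriv]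
    have h1 : c * p⁻¹ ≤ 0 := mul_nonpos_of_nonpos_of_nonneg hc (inv_nonneg.2 (le_of_lt hp))
    have h2 : c * q⁻¹ ≤ 0 := mul_nonpos_of_nonpos_of_nonneg hc (inv_nonneg.2 (le_of_lt hq))
    have h3 : c * p⁻¹ ≤ c * q⁻¹ :=
      mul_le_mul_of_nonpos_left (inv_anti₀ hp hpq) hc
    exact phi_mono h1 h2 h3

private lemma convexOn_finset_sum {ι E : Type*} [AddCommGroup E] [Module ℝ E] {s : Set E}
    (hs : Convex ℝ s) (t : Finset ι) (f : ι → E → ℝ) (hf : ∀ i ∈ t, ConvexOn ℝ s (f i)) :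
    ConvexOn ℝ s (fun x => ∑ i ∈ t, f i x) := by
  classical
  revert hf
  induction t using Finset.induction_on with
  | empty =>
      intro _
      simp only [Finset.sum_empty]
      exact ⟨hs, fun x _ y _ a b _ _ _ => by simp⟩
  | @insert a t ha ih =>
      intro hf
      simp only [Finset.sum_insert ha]
      exact (hf a (Finset.mem_insert_self _ _)).add
        (ih fun i hi => hf i (Finset.mem_insert_of_mem hi))

/-- **Convexity of `F_{1,P}(r)` in `P`, and the least-favorable distribution.**
For fixed `r ∈ [0,1]`, `P ↦ ∑_w P_w r^{1/P_w}` is convex on the probability simplex;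
and for `Δ < 1/2` (with at least two tokens) its supremum over the `Δ`-regular class
`{P : max_w P_w ≤ 1−Δ}` is attained (at a permutation of the extreme point
`(1−Δ, Δ, 0, …, 0)`) with value `(1−Δ) r^{1/(1−Δ)} + Δ r^{1/Δ}`. -/
theorem F_convex_and_sup_on_regular_class {W : Type*} [Fintype W]
    (r : ℝ) (hr : r ∈ Set.Icc (0:ℝ) 1) :
    ConvexOn ℝ (stdSimplex ℝ W) (fun P : W → ℝ => ∑ w, P w * r ^ (1 / P w)) ∧
    ∀ Δ : ℝ, 0 < Δ → Δ < 1 / 2 → 2 ≤ Fintype.card W →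
      IsGreatest ((fun P : W → ℝ => ∑ w, P w * r ^ (1 / P w)) ''
          {P | P ∈ stdSimplex ℝ W ∧ ∀ w, P w ≤ 1 - Δ})
        ((1 - Δ) * r ^ (1 / (1 - Δ)) + Δ * r ^ (1 / Δ)) := by
  classical
  obtain ⟨hr0, hr1⟩ := hr
  -- convexity of the one–dimensional building block `p ↦ p * r ^ (1/p)` on `[0,∞)`
  have hh : ConvexOn ℝ (Set.Ici (0:ℝ)) (fun p : ℝ => p * r ^ (1 / p)) := by
    rcases eq_or_lt_of_le hr0 with h0 | h0
    · -- r = 0 : the function vanishes on `[0,∞)`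
      have : ∀ p ∈ Set.Ici (0:ℝ), p * r ^ (1 / p) = 0 := by
        intro p hp
        rcases eq_or_lt_of_le hp.out with hp0 | hp0
        · simp [← hp0]
        · rw [← h0, Real.zero_rpow (by positivity), mul_zero]
      refine ⟨convex_Ici 0, ?_⟩
      intro x hx y hy a b ha hb hab
      have hm : a • x + b • y ∈ Set.Ici (0:ℝ) := (convex_Ici 0) hx hy ha hb hab
      simp only [smul_eq_mul]
      rw [this (a * x + b * y) (by simpa using hm), this x hx, this y hy]
      simp
    · -- r > 0 : rewrite as `p * exp (log r * p⁻¹)`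
      have hc : Real.log r ≤ 0 := Real.log_nonpos hr0 hr1
      have hEq : ∀ p : ℝ, p * r ^ (1 / p) = p * Real.exp (Real.log r * p⁻¹) := by
        intro p
        rw [Real.rpow_def_of_pos h0, one_div]
      have := g_convexOn hc
      refine ⟨convex_Ici 0, ?_⟩
      intro x hx y hy a b ha hb hab
      have h2 := this.2 hx hy ha hb hab
      simp only [smul_eq_mul] at h2 ⊢
      rw [hEq, hEq, hEq]
      exact h2
  -- convexity of `F`
  have hF : ConvexOn ℝ (stdSimplex ℝ W) (fun P : W → ℝ => ∑ w, P w * r ^ (1 / P w)) := by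
    apply convexOn_finset_sum (convex_stdSimplex ℝ W)
    intro w _
    refine ⟨convex_stdSimplex ℝ W, ?_⟩
    intro P hP Q hQ a b ha hb hab
    have := hh.2 (Set.mem_Ici.2 (hP.1 w)) (Set.mem_Ici.2 (hQ.1 w)) ha hb hab
    simpa [smul_eq_mul] using this
  refine ⟨hF, ?_⟩
  intro Δ hΔ0 hΔhalf hcard
  have h1Δ : (0:ℝ) < 1 - Δ := by linarith
  constructor
  · -- the value is attained at `(1-Δ, Δ, 0, …, 0)`
    obtain ⟨w0, w1, hne⟩ := Fintype.exists_pair_of_one_lt_card (α := W) (by omega)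
    set P0 : W → ℝ := fun w => if w = w0 then 1 - Δ else if w = w1 then Δ else 0 with hP0
    have key : ∀ G : W → ℝ, (∀ w, w ≠ w0 → w ≠ w1 → G w = 0) →
        ∑ w, G w = G w0 + G w1 := by
      intro G hG
      rw [← Finset.sum_subset (Finset.subset_univ ({w0, w1} : Finset W))]
      · rw [Finset.sum_pair hne]
      · intro x _ hx
        simp only [Finset.mem_insert, Finset.mem_singleton, not_or] at hx
        exact hG x hx.1 hx.2
    have hP0w0 : P0 w0 = 1 - Δ := by simp [hP0]
    have hP0w1 : P0 w1 = Δ := by simp [hP0, hne.symm]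
    refine ⟨P0, ⟨⟨fun w => ?_, ?_⟩, fun w => ?_⟩, ?_⟩
    · by_cases h1 : w = w0
      · simp [hP0, h1]; linarith
      · by_cases h2 : w = w1
        · simp [hP0, h1, h2, hne.symm]; linarith
        · simp [hP0, h1, h2]
    · rw [key P0 (fun w h1 h2 => by simp [hP0, h1, h2]), hP0w0, hP0w1]; ring
    · by_cases h1 : w = w0
      · simp [hP0, h1]
      · by_cases h2 : w = w1
        · simp [hP0, h1, h2, hne.symm]; linarith
        · simp [hP0, h1, h2]; linarith
    · show ∑ w, P0 w * r ^ (1 / P0 w) = _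
      rw [key _ (fun w h1 h2 => by simp [hP0, h1, h2]), hP0w0, hP0w1]
  · -- the upper bound
    rintro y ⟨P, ⟨hPs, hPcap⟩, rfl⟩
    rcases eq_or_lt_of_le hr0 with h0 | h0
    · -- r = 0 : both sides are 0
      simp only []
      rw [← h0]
      have hL : ∑ w, P w * (0:ℝ) ^ (1 / P w) = 0 := by
        apply Finset.sum_eq_zero
        intro w _
        rcases eq_or_lt_of_le (hPs.1 w) with hp0 | hp0
        · simp [← hp0]
        · rw [Real.zero_rpow (by positivity), mul_zero]
      rw [hL, Real.zero_rpow (by positivity), Real.zero_rpow (by positivity)]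
      norm_num
    -- r > 0
    have hne : Nonempty W := Fintype.card_pos_iff.1 (by omega)
    obtain ⟨ws, -, hmax⟩ := Finset.exists_max_image Finset.univ P Finset.univ_nonempty
    set m : ℝ := P ws with hm
    have hmax' : ∀ w, P w ≤ m := fun w => hmax w (Finset.mem_univ w)
    have hm0 : 0 < m := by
      by_contra hle
      push_neg at hle
      have hz : ∑ w, P w = 0 :=
        Finset.sum_eq_zero fun w _ => le_antisymm ((hmax' w).trans hle) (hPs.1 w)
      rw [hPs.2] at hz; norm_num at hz
    have hmcap : m ≤ 1 - Δ := hPcap ws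
    have h1m : 0 < 1 - m := by linarith
    set t : ℝ := min m (1 - m) with ht
    have ht0 : 0 < t := lt_min hm0 h1m
    have hrest : ∑ w ∈ Finset.univ.erase ws, P w = 1 - m := by
      have := Finset.add_sum_erase Finset.univ P (Finset.mem_univ ws)
      rw [hPs.2] at this; linarith
    have hle1m : ∀ w, w ≠ ws → P w ≤ 1 - m := by
      intro w hw
      have h1 : P w + m = ∑ x ∈ ({w, ws} : Finset W), P x := (Finset.sum_pair hw).symm
      have h2 : ∑ x ∈ ({w, ws} : Finset W), P x ≤ ∑ x, P x :=
        Finset.sum_le_sum_of_subset_of_nonneg (Finset.subset_univ _)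
          fun i _ _ => hPs.1 i
      rw [hPs.2] at h2; linarith
    have slope : ∀ p s : ℝ, 0 ≤ p → p ≤ s → 0 < s →
        p * r ^ (1 / p) ≤ p * r ^ (1 / s) := by
      intro p s hp hps hs
      rcases eq_or_lt_of_le hp with hp0 | hp0
      · simp [← hp0]
      · apply mul_le_mul_of_nonneg_left _ hp
        exact Real.rpow_le_rpow_of_exponent_ge h0 hr1 (one_div_le_one_div_of_le hp0 hps)
    have step1 : ∑ w, P w * r ^ (1 / P w) ≤ m * r ^ (1 / m) + (1 - m) * r ^ (1 / t) := by
      rw [← Finset.add_sum_erase Finset.univ _ (Finset.mem_univ ws)]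
      apply add_le_add_right
      calc ∑ w ∈ Finset.univ.erase ws, P w * r ^ (1 / P w)
          ≤ ∑ w ∈ Finset.univ.erase ws, P w * r ^ (1 / t) := by
            apply Finset.sum_le_sum
            intro w hw
            exact slope _ t (hPs.1 w)
              (le_min (hmax' w) (hle1m w (Finset.ne_of_mem_erase hw))) ht0
        _ = (1 - m) * r ^ (1 / t) := by rw [← Finset.sum_mul, hrest]
    -- the auxiliary function ψ
    set c : ℝ := Real.log r with hcdef
    have hc : c ≤ 0 := Real.log_nonpos hr0 hr1
    have hrpow : ∀ p : ℝ, r ^ (1 / p) = Real.exp (c * p⁻¹) := by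
      intro p
      rw [Real.rpow_def_of_pos h0, one_div]
    set ψ : ℝ → ℝ :=
      fun x => x * Real.exp (c * x⁻¹) + (1 - x) * Real.exp (c * (1 - x)⁻¹) with hψ
    have hψd : ∀ x : ℝ, x ≠ 0 → (1:ℝ) - x ≠ 0 →
        HasDerivAt ψ (Real.exp (c * x⁻¹) * (1 - c * x⁻¹)
          + Real.exp (c * (1 - x)⁻¹) * (1 - c * (1 - x)⁻¹) * (-1)) x := by
      intro x hx h1x
      have hA := g_hasDeriv c hx
      have hlin : HasDerivAt (fun x : ℝ => 1 - x) (-1) x := by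
        have h : HasDerivAt (fun x : ℝ => 1 - x) (0 - 1) x := (hasDerivAt_const x (1:ℝ)).sub (hasDerivAt_id x)
        simpa using h
      have hB := (g_hasDeriv c h1x).comp x hlin
      exact hA.add hB
    have hψmono : MonotoneOn ψ (Set.Icc (1/2 : ℝ) (1 - Δ)) := by
      apply monotoneOn_of_deriv_nonneg (convex_Icc _ _)
      · intro x hx
        have hx0 : x ≠ 0 := by have := hx.1; positivity
        have h1x : (1:ℝ) - x ≠ 0 := by have := hx.2; intro h; nlinarith
        exact (hψd x hx0 h1x).differentiableAt.continuousAt.continuousWithinAt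
      · rw [interior_Icc]
        intro x hx
        have hx0 : x ≠ 0 := by have := hx.1; positivity
        have h1x : (1:ℝ) - x ≠ 0 := by have := hx.2; intro h; nlinarith
        exact (hψd x hx0 h1x).differentiableAt.differentiableWithinAt
      · rw [interior_Icc]
        intro x hx
        have hx0 : (0:ℝ) < x := lt_trans (by norm_num) hx.1
        have h1x : (0:ℝ) < 1 - x := by have := hx.2; linarith
        rw [(hψd x hx0.ne' h1x.ne').deriv]
        have harg1 : c * x⁻¹ ≤ 0 :=
          mul_nonpos_of_nonpos_of_nonneg hc (inv_nonneg.2 hx0.le)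
        have harg2 : c * (1 - x)⁻¹ ≤ 0 :=
          mul_nonpos_of_nonpos_of_nonneg hc (inv_nonneg.2 h1x.le)
        have hord : c * (1 - x)⁻¹ ≤ c * x⁻¹ := by
          apply mul_le_mul_of_nonpos_left _ hc
          exact inv_anti₀ h1x (by linarith [hx.1])
        have := phi_mono harg2 harg1 hord
        simp only at this
        nlinarith [this]
      done
    have hRHS : (1 - Δ) * r ^ (1 / (1 - Δ)) + Δ * r ^ (1 / Δ) = ψ (1 - Δ) := by
      rw [hψ]
      simp only
      rw [hrpow, hrpow]
      ring_nf
    have hhalf_mem : (1/2 : ℝ) ∈ Set.Icc (1/2 : ℝ) (1 - Δ) := by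
      constructor <;> [linarith; linarith]
    have hend_mem : (1 - Δ) ∈ Set.Icc (1/2 : ℝ) (1 - Δ) := by
      constructor <;> linarith
    rcases le_or_gt m (1/2) with hcase | hcase
    · -- small max: bound by r^2 = ψ(1/2)
      have htm : t = m := min_eq_left (by linarith)
      have hb : m * r ^ (1 / m) + (1 - m) * r ^ (1 / t) = Real.exp (c * m⁻¹) := by
        rw [htm, hrpow]; ring
      have hexp : Real.exp (c * m⁻¹) ≤ Real.exp (c * 2) := by
        apply Real.exp_le_exp.2
        have h2m : (2:ℝ) ≤ m⁻¹ := by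
          have := inv_anti₀ hm0 hcase
          norm_num at this
          linarith
        exact mul_le_mul_of_nonpos_left h2m hc
      have hψhalf : ψ (1/2) = Real.exp (c * 2) := by
        rw [hψ]; norm_num; ring_nf
      have hmono := hψmono hhalf_mem hend_mem (by linarith)
      rw [hRHS]
      calc ∑ w, P w * r ^ (1 / P w) ≤ m * r ^ (1 / m) + (1 - m) * r ^ (1 / t) := step1
        _ = Real.exp (c * m⁻¹) := hb
        _ ≤ Real.exp (c * 2) := hexp
        _ = ψ (1/2) := hψhalf.symm
        _ ≤ ψ (1 - Δ) := hmono
    · -- large max: bound by ψ(m)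
      have htm : t = 1 - m := min_eq_right (by linarith)
      have hb : m * r ^ (1 / m) + (1 - m) * r ^ (1 / t) = ψ m := by
        rw [htm, hψ, hrpow, hrpow]
      have hmem : m ∈ Set.Icc (1/2 : ℝ) (1 - Δ) := ⟨hcase.le, hmcap⟩
      have hmono := hψmono hmem hend_mem hmcap
      rw [hRHS]
      calc ∑ w, P w * r ^ (1 / P w) ≤ m * r ^ (1 / m) + (1 - m) * r ^ (1 / t) := step1
        _ = ψ m := hb
        _ ≤ ψ (1 - Δ) := hmono
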